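/- Let q = 2^m and suppose f(x) = x + α x^{q(q-1)+1} + β x^{2(q-1)+1} with α, β ∈ F_{q^2}^*, β = α^{q-1}, and Tr(1 + 1/α^{q+1}) = 0. Then f permutes F_{q^2}. -/

import Mathlib

/-- The absolute trace `Tr(z) = z + z^2 + z^4 + ⋯ + z^{2^{m-1}}`, computed inside the field. -/
def traceSum {F : Type*} [Field F] (m : ℕ) (z : F) : F :=
  ∑ j ∈ Finset.range m, z ^ 2 ^ j

set_option maxHeartbeats 4000000 in
/-- Sufficiency, case 1 (Tu–Zeng–Li–Helleseth): if `β = α^{q-1}` and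
`Tr(1 + 1/α^{q+1}) = 0` then `f(x) = x + α x^{q(q-1)+1} + β x^{2(q-1)+1}` permutes `F_{q^2}`. -/
theorem stmt_17 {E : Type*} [Field E] [Fintype E] (m : ℕ) (hm : 0 < m)
    (hE : Fintype.card E = (2 ^ m) ^ 2) (α β : E) (hαβ : α * β ≠ 0)
    (h1 : β = α ^ (2 ^ m - 1)) (h2 : traceSum m (1 + 1 / α ^ (2 ^ m + 1)) = 0) :
    Function.Bijective
      (fun x : E => x + α * x ^ (2 ^ m * (2 ^ m - 1) + 1) + β * x ^ (2 * (2 ^ m - 1) + 1)) := by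
  have hq2 : 2 ≤ 2 ^ m := by
    calc 2 = 2 ^ 1 := by norm_num
    _ ≤ 2 ^ m := Nat.pow_le_pow_right (by norm_num) hm
  set q : ℕ := 2 ^ m with hqdef
  -- characteristic 2
  haveI hchar : CharP E 2 := by
    haveI := ringChar.charP E
    obtain ⟨n, hp, hcard⟩ := FiniteField.card E (ringChar E)
    have key : ringChar E ^ (n : ℕ) = 2 ^ (m * 2) := by
      rw [← hcard, hE, hqdef, ← pow_mul, mul_comm]
    have hdvd : ringChar E ∣ 2 ^ (m * 2) := key ▸ dvd_pow_self (ringChar E) n.pos.ne'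
    have h2 : ringChar E = 2 :=
      (Nat.prime_dvd_prime_iff_eq hp Nat.prime_two).mp (hp.dvd_of_dvd_pow hdvd)
    rwa [h2] at this
  have htwo : (2 : E) = 0 := by exact_mod_cast CharP.cast_eq_zero E 2
  have frobq : ∀ a b : E, (a + b) ^ q = a ^ q + b ^ q := fun a b =>
    add_pow_char_pow a b 2 m
  have hqq : ∀ w : E, (w ^ q) ^ q = w := by
    intro w
    rw [← pow_mul]
    have := FiniteField.pow_card w
    rwa [hE, pow_two] at this
  -- trace lemmas
  have trace_add : ∀ a b : E, traceSum m (a + b) = traceSum m a + traceSum m b := by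
    intro a b
    unfold traceSum
    rw [← Finset.sum_add_distrib]
    exact Finset.sum_congr rfl fun j _ => add_pow_char_pow a b 2 j
  have trace_AS : ∀ θ : E, traceSum m (θ ^ 2 + θ) = θ ^ q + θ := by
    intro θ
    unfold traceSum
    have step : ∀ j : ℕ, (θ ^ 2 + θ) ^ 2 ^ j = θ ^ 2 ^ (j + 1) - θ ^ 2 ^ j := by
      intro j
      rw [CharTwo.sub_eq_add, add_pow_char_pow, ← pow_mul, ← pow_succ']
    rw [Finset.sum_congr rfl fun j _ => step j,
      Finset.sum_range_sub (fun j => θ ^ 2 ^ j), CharTwo.sub_eq_add, pow_zero, pow_one]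
  -- basic nonvanishing
  have hα0 : α ≠ 0 := fun h => hαβ (by rw [h, zero_mul])
  have hβ0 : β ≠ 0 := fun h => hαβ (by rw [h, mul_zero])
  obtain ⟨αq, hαqdef⟩ : ∃ t : E, t = α ^ q := ⟨_, rfl⟩
  obtain ⟨βq, hβqdef⟩ : ∃ t : E, t = β ^ q := ⟨_, rfl⟩
  have hαq0 : αq ≠ 0 := hαqdef ▸ pow_ne_zero q hα0
  have hβq0 : βq ≠ 0 := hβqdef ▸ pow_ne_zero q hβ0
  have hβα : β * α = αq := by
    rw [h1, hαqdef, ← pow_succ]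
    congr 1
    omega
  have hαqq : αq ^ q = α := by rw [hαqdef]; exact hqq α
  have hβqαq : βq * αq = α := by
    have h := congrArg (· ^ q) hβα
    simp only [mul_pow] at h
    rw [← hβqdef, ← hαqdef] at h
    rw [h, hαqq]
  have hββq : β * βq = 1 := by
    apply mul_right_cancel₀ (mul_ne_zero hα0 hαq0)
    linear_combination βq * αq * hβα + αq * hβqαq
  -- the trace condition, rephrased
  have hc0 : traceSum m (1 + (αq * α)⁻¹) = 0 := by
    have : α ^ (q + 1) = αq * α := by rw [pow_succ, hαqdef, mul_comm]
    rwa [this, one_div] at h2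
  -- Step B : the "h" factor does not vanish on μ_{q+1}
  have stepB : ∀ u Uu : E, Uu = u ^ q → u ^ (q + 1) = 1 → 1 + α * Uu + β * u ^ 2 ≠ 0 := by
    intro u Uu hUdef hu1 hcon
    have hu0 : u ≠ 0 := by
      rintro rfl
      rw [zero_pow (by omega)] at hu1
      exact zero_ne_one hu1
    have huq : Uu * u = 1 := by rw [hUdef, ← pow_succ]; exact hu1
    have hD : β * u ^ 3 + u + α = 0 := by linear_combination u * hcon - α * huq
    have hDq : βq * Uu ^ 3 + Uu + αq = 0 := by
      have h := congrArg (· ^ q) hD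
      rw [frobq, frobq, mul_pow, zero_pow (by omega : q ≠ 0), ← pow_mul, mul_comm 3 q,
        pow_mul, ← hUdef, ← hβqdef, ← hαqdef] at h
      exact h
    have hN : αq * u ^ 3 + u ^ 2 + βq = 0 := by
      linear_combination u ^ 3 * hDq - (βq * ((Uu * u) ^ 2 + Uu * u + 1) + u ^ 2) * huq
    have hQuad : β * u ^ 2 + αq * u + (αq * α + 1) = 0 := by
      linear_combination β * hN - αq * hD + (αq * u + αq * α) * htwo - hββq
    -- pass to y = u/α and use the trace hypothesis
    have hyc : (u * α⁻¹) ^ 2 + (u * α⁻¹) = 1 + (αq * α)⁻¹ := by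
      field_simp
      linear_combination α * hQuad - (u ^ 2) * hβα - (α ^ 2 * αq + α) * htwo
    have htr : (u * α⁻¹) ^ q + (u * α⁻¹) = 0 := by
      rw [← trace_AS (u * α⁻¹), hyc]
      exact hc0
    have hθq : (u * α⁻¹) ^ q = u * α⁻¹ := by
      have h8 := eq_neg_of_add_eq_zero_left htr
      simpa [CharTwo.neg_eq] using h8
    have hUα : Uu * α = u * αq := by
      rw [mul_pow, inv_pow, ← hαqdef, ← hUdef] at hθq
      field_simp at hθq
      linear_combination hθq
    have hu2 : u ^ 2 * αq = α := by linear_combination α * huq - u * hUα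
    have hβu2 : β * u ^ 2 = 1 := by
      apply mul_right_cancel₀ hαq0
      linear_combination β * hu2 + hβα
    have hsum0 : αq * (u + α) = 0 := by linear_combination hQuad - hβu2 - htwo
    have huα : u = α := by
      have h9 := (mul_eq_zero.mp hsum0).resolve_left hαq0
      have := eq_neg_of_add_eq_zero_left h9
      simpa [CharTwo.neg_eq] using this
    rw [huα] at hD
    have : β * α ^ 3 = 0 := by linear_combination hD - α * htwo
    exact (mul_ne_zero hβ0 (pow_ne_zero 3 hα0)) this
  -- values at nonzero points are nonzero
  have hnatexp : (q - 1) * (q + 1) = q * q - 1 := by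
    obtain ⟨r, hr⟩ : ∃ r, q = r + 2 := ⟨q - 2, by omega⟩
    rw [hr]
    show (r + 1) * (r + 2 + 1) = (r + 2) * (r + 2) - 1
    rw [show (r + 2) * (r + 2) = (r + 1) * (r + 2 + 1) + 1 from by ring, Nat.add_sub_cancel]
  have hmu : ∀ x : E, x ≠ 0 → (x ^ (q - 1)) ^ (q + 1) = 1 := by
    intro x hx
    rw [← pow_mul, hnatexp]
    have := FiniteField.pow_card_sub_one_eq_one x hx
    rwa [hE, pow_two] at this
  have hfactor : ∀ x : E,
      x + α * x ^ (q * (q - 1) + 1) + β * x ^ (2 * (q - 1) + 1)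
        = x * (1 + α * (x ^ (q - 1)) ^ q + β * (x ^ (q - 1)) ^ 2) := by
    intro x
    rw [mul_comm q (q - 1), ← pow_mul, ← pow_mul, pow_succ, pow_succ, mul_comm 2 (q-1)]
    ring
  have hval : ∀ x : E, x ≠ 0 →
      x + α * x ^ (q * (q - 1) + 1) + β * x ^ (2 * (q - 1) + 1) ≠ 0 := by
    intro x hx
    rw [hfactor x]
    exact mul_ne_zero hx (stepB (x ^ (q - 1)) _ rfl (hmu x hx))
  -- injectivity suffices
  rw [← Finite.injective_iff_bijective]
  intro x y hfxy
  simp only [] at hfxy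
  by_cases hx : x = 0
  · by_cases hy : y = 0
    · rw [hx, hy]
    · exfalso
      apply hval y hy
      rw [← hfxy, hx]
      rw [zero_pow (by omega : q * (q-1) + 1 ≠ 0), zero_pow (by omega : 2 * (q-1) + 1 ≠ 0)]
      ring
  · by_cases hy : y = 0
    · exfalso
      apply hval x hx
      rw [hfxy, hy]
      rw [zero_pow (by omega : q * (q-1) + 1 ≠ 0), zero_pow (by omega : 2 * (q-1) + 1 ≠ 0)]
      ring
    · -- the main case
      obtain ⟨u, hudef⟩ : ∃ t : E, t = x ^ (q - 1) := ⟨_, rfl⟩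
      obtain ⟨v, hvdef⟩ : ∃ t : E, t = y ^ (q - 1) := ⟨_, rfl⟩
      obtain ⟨Uu, hUdef⟩ : ∃ t : E, t = u ^ q := ⟨_, rfl⟩
      obtain ⟨Vv, hVdef⟩ : ∃ t : E, t = v ^ q := ⟨_, rfl⟩
      have hu1 : u ^ (q + 1) = 1 := hudef ▸ hmu x hx
      have hv1 : v ^ (q + 1) = 1 := hvdef ▸ hmu y hy
      have hu0 : u ≠ 0 := hudef ▸ pow_ne_zero _ hx
      have hv0 : v ≠ 0 := hvdef ▸ pow_ne_zero _ hy
      have huq : Uu * u = 1 := by rw [hUdef, ← pow_succ]; exact hu1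
      have hvq : Vv * v = 1 := by rw [hVdef, ← pow_succ]; exact hv1
      have hU0 : Uu ≠ 0 := left_ne_zero_of_mul_eq_one huq
      have hV0 : Vv ≠ 0 := left_ne_zero_of_mul_eq_one hvq
      have hE1 : x * (1 + α * Uu + β * u ^ 2) = y * (1 + α * Vv + β * v ^ 2) := by
        rw [hUdef, hVdef, hudef, hvdef]
        rw [hfactor x, hfactor y] at hfxy
        exact hfxy
      have hxq : x ^ q = u * x := by rw [hudef, ← pow_succ]; congr 1; omega
      have hyq2 : y ^ q = v * y := by rw [hvdef, ← pow_succ]; congr 1; omega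
      have hUq : Uu ^ q = u := by rw [hUdef]; exact hqq u
      have hVq : Vv ^ q = v := by rw [hVdef]; exact hqq v
      have hE2 : (u * x) * (1 + αq * u + βq * Uu ^ 2) = (v * y) * (1 + αq * v + βq * Vv ^ 2) := by
        have h := congrArg (· ^ q) hE1
        rw [mul_pow, mul_pow, frobq, frobq, frobq, frobq, one_pow,
          mul_pow, mul_pow, mul_pow, mul_pow, hxq, hyq2, hUq, hVq,
          pow_right_comm u 2 q, pow_right_comm v 2 q,
          ← hαqdef, ← hβqdef, ← hUdef, ← hVdef] at h
        exact h
      by_cases huv : u = v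
      · have hUV : Uu = Vv := by rw [hUdef, hVdef, huv]
        rw [huv, hUV] at hE1
        exact mul_right_cancel₀ (stepB v Vv hVdef hv1) hE1
      · exfalso
        have huvne : u - v ≠ 0 := sub_ne_zero.mpr huv
        have huv0 : u + v ≠ 0 := by
          intro h
          apply huv
          have := eq_neg_of_add_eq_zero_left h
          simpa [CharTwo.neg_eq] using this
        have hE3 : u * (1 + αq * u + βq * Uu ^ 2) * (1 + α * Vv + β * v ^ 2)
            = v * (1 + αq * v + βq * Vv ^ 2) * (1 + α * Uu + β * u ^ 2) := by
          apply mul_left_cancel₀ (mul_ne_zero hx hy)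
          have hcross : (u * x * (1 + αq * u + βq * Uu ^ 2)) * (y * (1 + α * Vv + β * v ^ 2))
              = (v * y * (1 + αq * v + βq * Vv ^ 2)) * (x * (1 + α * Uu + β * u ^ 2)) := by
            rw [hE2, hE1]
          linear_combination hcross
        have hND : (u * v) * ((αq * u ^ 3 + u ^ 2 + βq) * (β * v ^ 3 + v + α))
            = (u * v) * ((αq * v ^ 3 + v ^ 2 + βq) * (β * u ^ 3 + u + α)) := by
          linear_combination (u ^ 2 * v ^ 2) * hE3
            + (α * αq * u * v ^ 4 - α * βq * u ^ 2 * v ^ 2 * Uu * Vv + α * βq * u * v ^ 3 * Vv ^ 2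
              - α * βq * u * v ^ 2 * Vv + α * u * v ^ 3 - β * βq * u ^ 2 * v ^ 4 * Uu
              - β * βq * u * v ^ 4 - βq * u ^ 2 * v ^ 2 * Uu - βq * u * v ^ 2) * huq
            + (-(α * αq * u ^ 4 * v) + α * βq * u * v ^ 2 * Vv - α * u ^ 3 * v
              + β * βq * u ^ 4 * v ^ 2 * Vv + β * βq * u ^ 4 * v + βq * u ^ 2 * v ^ 2 * Vv
              + βq * u ^ 2 * v) * hvq
        have hND2 : (αq * u ^ 3 + u ^ 2 + βq) * (β * v ^ 3 + v + α)
            = (αq * v ^ 3 + v ^ 2 + βq) * (β * u ^ 3 + u + α) :=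
          mul_left_cancel₀ (mul_ne_zero hu0 hv0) hND
        have hQ : α * αq * u ^ 2 + α * αq * u * v + α * αq * v ^ 2 + α * u + α * v
            + αq * u ^ 2 * v + αq * u * v ^ 2 - β * βq * u ^ 2 - β * βq * u * v - β * βq * v ^ 2
            - β * u ^ 2 * v ^ 2 - βq + u * v = 0 := by
          have h10 : (u - v) * (α * αq * u ^ 2 + α * αq * u * v + α * αq * v ^ 2 + α * u + α * v
              + αq * u ^ 2 * v + αq * u * v ^ 2 - β * βq * u ^ 2 - β * βq * u * v - β * βq * v ^ 2
              - β * u ^ 2 * v ^ 2 - βq + u * v) = 0 := by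
            linear_combination hND2
          exact (mul_eq_zero.mp h10).resolve_left huvne
        have hstar : (αq * α) * (β * (u * v)) ^ 2 + (αq * α) * (β * (u * v)) * (αq * (u + v))
            + (αq * α) ^ 2 * (β * (u * v)) + ((αq * α) + 1) * (αq * (u + v)) ^ 2
            + (αq * α) * (αq * (u + v)) + (αq * α) = 0 := by
          linear_combination (αq ^ 2) * hQ
            + (α * αq ^ 2 * u * v + αq ^ 2 * u ^ 2 * v + αq ^ 2 * u * v ^ 2
              + αq * β * u ^ 2 * v ^ 2 + αq * u ^ 2 + αq * u * v + αq * v ^ 2) * hβα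
            + (αq * β * u ^ 2 + αq * β * u * v + αq * β * v ^ 2 + αq) * hβqαq
            + (α * αq ^ 3 * u * v + α * αq + αq ^ 2 * β * u ^ 2 * v ^ 2 + αq ^ 2 * u ^ 2
              + αq ^ 2 * u * v + αq ^ 2 * v ^ 2) * htwo
        -- auxiliary nonvanishing
        have hA0 : αq * α ≠ 0 := mul_ne_zero hαq0 hα0
        have hS0 : αq * (u + v) ≠ 0 := mul_ne_zero hαq0 huv0
        have hUVuv : (Uu + Vv) * (u * v) = u + v := by linear_combination v * huq + u * hvq
        have hUV0 : Uu + Vv ≠ 0 := by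
          intro h
          apply huv0
          rw [← hUVuv, h, zero_mul]
        obtain ⟨G, hGdef⟩ : ∃ t : E, t = (β * (u * v) + 1) ^ 2 / (αq * (u + v)) ^ 2 := ⟨_, rfl⟩
        obtain ⟨z, hzdef⟩ : ∃ t : E, t = u * v / (u + v) ^ 2 := ⟨_, rfl⟩
        obtain ⟨c0, hc0def⟩ : ∃ t : E, t = 1 + (αq * α)⁻¹ := ⟨_, rfl⟩
        have hT2 : (αq * α) ^ 2 * ((β * (u * v) + 1) ^ 2) ^ 2
            + (αq * α) ^ 2 * ((β * (u * v) + 1) ^ 2) * ((αq * (u + v)) ^ 2)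
            + αq ^ 4 * (((αq * α) + 1) * (u + v) ^ 2 + (αq * α) * (u * v)) ^ 2 = 0 := by
          linear_combination ((αq * α) * (β * (u * v)) ^ 2
              + (αq * α) * (β * (u * v)) * (αq * (u + v))
              + (αq * α) ^ 2 * (β * (u * v)) + ((αq * α) + 1) * (αq * (u + v)) ^ 2
              + (αq * α) * (αq * (u + v)) + (αq * α)) * hstar
            + (-(α ^ 3 * αq ^ 4 * β * u ^ 2 * v ^ 2) - 2 * α ^ 2 * αq ^ 5 * u ^ 3 * v
              - 5 * α ^ 2 * αq ^ 5 * u ^ 2 * v ^ 2 - 2 * α ^ 2 * αq ^ 5 * u * v ^ 3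
              - 2 * α ^ 2 * αq ^ 4 * β * u ^ 3 * v ^ 2 - 2 * α ^ 2 * αq ^ 4 * β * u ^ 2 * v ^ 3
              - 2 * α ^ 2 * αq ^ 4 * u ^ 2 * v - 2 * α ^ 2 * αq ^ 4 * u * v ^ 2
              - 2 * α ^ 2 * αq ^ 3 * β ^ 2 * u ^ 3 * v ^ 3 - 2 * α ^ 2 * αq ^ 3 * u * v
              - 2 * α * αq ^ 5 * u ^ 4 * v - 8 * α * αq ^ 5 * u ^ 3 * v ^ 2
              - 8 * α * αq ^ 5 * u ^ 2 * v ^ 3 - 2 * α * αq ^ 5 * u * v ^ 4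
              - 2 * α * αq ^ 4 * β * u ^ 4 * v ^ 2 - 6 * α * αq ^ 4 * β * u ^ 3 * v ^ 3
              - 2 * α * αq ^ 4 * β * u ^ 2 * v ^ 4 - 2 * α * αq ^ 4 * u ^ 3 * v
              - 4 * α * αq ^ 4 * u ^ 2 * v ^ 2 - 2 * α * αq ^ 4 * u * v ^ 3
              - 2 * α * αq ^ 3 * β ^ 2 * u ^ 4 * v ^ 3 - 2 * α * αq ^ 3 * β ^ 2 * u ^ 3 * v ^ 4
              - 2 * α * αq ^ 3 * β * u ^ 3 * v ^ 2 - 2 * α * αq ^ 3 * β * u ^ 2 * v ^ 3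
              - 2 * α * αq ^ 3 * u ^ 2 * v - 2 * α * αq ^ 3 * u * v ^ 2
              + 4 * α * αq ^ 2 * β ^ 2 * u ^ 3 * v ^ 3 + 4 * α * αq ^ 2 * β * u ^ 2 * v ^ 2
              + 4 * α * αq ^ 2 * u * v - 2 * αq ^ 5 * u ^ 4 * v ^ 2 - 6 * αq ^ 5 * u ^ 3 * v ^ 3
              - 2 * αq ^ 5 * u ^ 2 * v ^ 4 - 2 * αq ^ 4 * β * u ^ 4 * v ^ 3
              - 2 * αq ^ 4 * β * u ^ 3 * v ^ 4 - 2 * αq ^ 4 * u ^ 4 * v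
              - 8 * αq ^ 4 * u ^ 3 * v ^ 2 - 8 * αq ^ 4 * u ^ 2 * v ^ 3 - 2 * αq ^ 4 * u * v ^ 4
              - 2 * αq ^ 3 * β * u ^ 4 * v ^ 2 - 2 * αq ^ 3 * β * u ^ 2 * v ^ 4
              + 4 * αq ^ 3 * u ^ 2 * v ^ 2) * hβα
            + (-(α ^ 2 * αq ^ 5 * u ^ 3) - 4 * α ^ 2 * αq ^ 5 * u ^ 2 * v
              - 4 * α ^ 2 * αq ^ 5 * u * v ^ 2 - α ^ 2 * αq ^ 5 * v ^ 3 - α ^ 2 * αq ^ 4 * u ^ 2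
              - 3 * α ^ 2 * αq ^ 4 * u * v - α ^ 2 * αq ^ 4 * v ^ 2 - α ^ 2 * αq ^ 3 * u
              - α ^ 2 * αq ^ 3 * v - α * αq ^ 6 * u ^ 4 * v - 4 * α * αq ^ 6 * u ^ 3 * v ^ 2
              - 4 * α * αq ^ 6 * u ^ 2 * v ^ 3 - α * αq ^ 6 * u * v ^ 4 - α * αq ^ 4 * u ^ 3
              - 4 * α * αq ^ 4 * u ^ 2 * v - 4 * α * αq ^ 4 * u * v ^ 2 - α * αq ^ 4 * v ^ 3
              - α * αq ^ 3 * u ^ 2 - α * αq ^ 3 * v ^ 2 - αq ^ 6 * u ^ 4 * v ^ 2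
              - 3 * αq ^ 6 * u ^ 3 * v ^ 3 - αq ^ 6 * u ^ 2 * v ^ 4 - αq ^ 5 * β * u ^ 4 * v ^ 3
              - αq ^ 5 * β * u ^ 3 * v ^ 4 - αq ^ 5 * u ^ 4 * v - 4 * αq ^ 5 * u ^ 3 * v ^ 2
              - 4 * αq ^ 5 * u ^ 2 * v ^ 3 - αq ^ 5 * u * v ^ 4 - αq ^ 4 * β * u ^ 4 * v ^ 2
              - αq ^ 4 * β * u ^ 2 * v ^ 4 + 2 * αq ^ 4 * u ^ 2 * v ^ 2) * htwo
        have hGz : G ^ 2 + G = (c0 + z) ^ 2 := by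
          have expand : G ^ 2 + G + (c0 + z) ^ 2
              = ((αq * α) ^ 2 * ((β * (u * v) + 1) ^ 2) ^ 2
                + (αq * α) ^ 2 * ((β * (u * v) + 1) ^ 2) * ((αq * (u + v)) ^ 2)
                + αq ^ 4 * (((αq * α) + 1) * (u + v) ^ 2 + (αq * α) * (u * v)) ^ 2)
                / ((αq * α) ^ 2 * ((αq * (u + v)) ^ 2) ^ 2) := by
            rw [hGdef, hzdef, hc0def]
            field_simp
          rw [hT2, zero_div] at expand
          linear_combination expand - ((c0 + z) ^ 2) * htwo
        have hGq : G ^ q = G := by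
          have hnum : ((β * (u * v) + 1) ^ 2) ^ q = (βq * (Uu * Vv) + 1) ^ 2 := by
            rw [pow_right_comm, frobq, one_pow, mul_pow, mul_pow,
              ← hβqdef, ← hUdef, ← hVdef]
          have hden : ((αq * (u + v)) ^ 2) ^ q = (α * (Uu + Vv)) ^ 2 := by
            rw [pow_right_comm, mul_pow, hαqq, frobq, ← hUdef, ← hVdef]
          rw [hGdef, div_pow, hnum, hden]
          rw [div_eq_div_iff (pow_ne_zero 2 (mul_ne_zero hα0 hUV0)) (pow_ne_zero 2 hS0)]
          apply mul_left_cancel₀ (pow_ne_zero 2 (mul_ne_zero hu0 hv0))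
          linear_combination
            (-(α ^ 2 * β ^ 2 * u ^ 3 * v ^ 4 * Uu) - 2 * α ^ 2 * β ^ 2 * u ^ 3 * v ^ 4 * Vv
              - α ^ 2 * β ^ 2 * u ^ 2 * v ^ 4 - 2 * α ^ 2 * β * u ^ 2 * v ^ 3 * Uu
              - 4 * α ^ 2 * β * u ^ 2 * v ^ 3 * Vv - 2 * α ^ 2 * β * u * v ^ 3
              - α ^ 2 * u * v ^ 2 * Uu - 2 * α ^ 2 * u * v ^ 2 * Vv - α ^ 2 * v ^ 2
              + αq ^ 2 * βq ^ 2 * u ^ 3 * v ^ 2 * Uu * Vv ^ 2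
              + 2 * αq ^ 2 * βq ^ 2 * u ^ 2 * v ^ 3 * Uu * Vv ^ 2
              + αq ^ 2 * βq ^ 2 * u ^ 2 * v ^ 2 * Vv ^ 2
              + αq ^ 2 * βq ^ 2 * u * v ^ 4 * Uu * Vv ^ 2
              + 2 * αq ^ 2 * βq ^ 2 * u * v ^ 3 * Vv ^ 2 + αq ^ 2 * βq ^ 2 * v ^ 4 * Vv ^ 2
              + 2 * αq ^ 2 * βq * u ^ 3 * v ^ 2 * Vv + 4 * αq ^ 2 * βq * u ^ 2 * v ^ 3 * Vv
              + 2 * αq ^ 2 * βq * u * v ^ 4 * Vv) * huq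
            + (-(α ^ 2 * β ^ 2 * u ^ 4 * v ^ 3 * Vv) - α ^ 2 * β ^ 2 * u ^ 4 * v ^ 2
              - 2 * α ^ 2 * β ^ 2 * u ^ 3 * v ^ 3 - 2 * α ^ 2 * β * u ^ 3 * v ^ 2 * Vv
              - 2 * α ^ 2 * β * u ^ 3 * v - 4 * α ^ 2 * β * u ^ 2 * v ^ 2
              - α ^ 2 * u ^ 2 * v * Vv - α ^ 2 * u ^ 2 - 2 * α ^ 2 * u * v
              + αq ^ 2 * βq ^ 2 * u ^ 2 * v * Vv + αq ^ 2 * βq ^ 2 * u ^ 2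
              + 2 * αq ^ 2 * βq ^ 2 * u * v ^ 2 * Vv + 2 * αq ^ 2 * βq ^ 2 * u * v
              + αq ^ 2 * βq ^ 2 * v ^ 3 * Vv + αq ^ 2 * βq ^ 2 * v ^ 2
              + 2 * αq ^ 2 * βq * u ^ 3 * v + 4 * αq ^ 2 * βq * u ^ 2 * v ^ 2
              + 2 * αq ^ 2 * βq * u * v ^ 3) * hvq
            + (-(α * β * u ^ 4 * v ^ 2) - 2 * α * β * u ^ 3 * v ^ 3 - α * β * u ^ 2 * v ^ 4
              - 2 * α * u ^ 3 * v - 4 * α * u ^ 2 * v ^ 2 - 2 * α * u * v ^ 3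
              - αq * u ^ 4 * v ^ 2 - 2 * αq * u ^ 3 * v ^ 3 - αq * u ^ 2 * v ^ 4) * hβα
            + (α * u ^ 2 + 2 * α * u * v + α * v ^ 2 + αq * βq * u ^ 2 + 2 * αq * βq * u * v
              + αq * βq * v ^ 2 + 2 * αq * u ^ 3 * v + 4 * αq * u ^ 2 * v ^ 2
              + 2 * αq * u * v ^ 3) * hβqαq
        have hzq : z ^ q = z := by
          rw [hzdef, div_pow, mul_pow, pow_right_comm, frobq, ← hUdef, ← hVdef]
          rw [div_eq_div_iff (pow_ne_zero 2 hUV0) (pow_ne_zero 2 huv0)]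
          apply mul_left_cancel₀ (mul_ne_zero hu0 hv0)
          linear_combination (u ^ 2 * v * Vv - u * v ^ 2 * Uu + v ^ 3 * Vv - v ^ 2) * huq
            + (-(u ^ 2 * v * Vv) + v ^ 2) * hvq
        have hc0q : c0 ^ q = c0 := by
          rw [hc0def, frobq, one_pow, inv_pow, mul_pow, hαqq, ← hαqdef, mul_comm α αq]
        have hTrc0 : traceSum m c0 = 0 := by rw [hc0def]; exact hc0
        obtain ⟨θ, hθdef⟩ : ∃ t : E, t = u * (u + v)⁻¹ := ⟨_, rfl⟩
        have hθz : θ ^ 2 + θ = z := by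
          rw [hθdef, hzdef]
          field_simp
          linear_combination u * htwo
        have hθq : θ ^ q = Uu * (Uu + Vv)⁻¹ := by
          rw [hθdef, mul_pow, inv_pow, frobq, ← hUdef, ← hVdef]
        have hTrz : traceSum m z = 1 := by
          rw [← hθz, trace_AS θ, hθq, hθdef]
          field_simp
          linear_combination huq - hvq
        have hwq : (c0 + z) ^ q = c0 + z := by rw [frobq, hc0q, hzq]
        have e1 : traceSum m ((c0 + z) ^ 2) = G ^ q + G := by rw [← hGz]; exact trace_AS G
        rw [hGq] at e1
        have e2 : traceSum m ((c0 + z) ^ 2 + (c0 + z)) = (c0 + z) ^ q + (c0 + z) := trace_AS (c0 + z)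
        rw [hwq] at e2
        have e3 : traceSum m ((c0 + z) ^ 2 + (c0 + z))
            = traceSum m ((c0 + z) ^ 2) + traceSum m (c0 + z) := trace_add _ _
        have e4 : traceSum m (c0 + z) = traceSum m c0 + traceSum m z := trace_add _ _
        rw [hTrc0, hTrz, zero_add] at e4
        have hTrw2 : traceSum m ((c0 + z) ^ 2) = 0 := e1.trans (CharTwo.add_self_eq_zero G)
        have hTrw2w : traceSum m ((c0 + z) ^ 2 + (c0 + z)) = 0 :=
          e2.trans (CharTwo.add_self_eq_zero _)
        rw [hTrw2, e4, hTrw2w] at e3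
        simp at e3
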